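/- (Deterministic core of Theorem 5.) Let A ∈ ℝ^{I×J} with singular value decomposition A = U Σ V^T (Σ diagonal with entries σ_1 ≥ ⋯ ≥ σ_r > 0, r = min{I,J}), let μ < r and q ≥ 1, and let G ∈ ℝ^{I×(μ+K)}. Write U^T G = [H; R] with H ∈ ℝ^{μ×(μ+K)} the top block. Assume H has full row rank. Define F = [H^† Σ_1^{−(2q−1)}, 0] V^T ∈ ℝ^{(μ+K)×J}, where Σ_1 = Σ(1:μ,1:μ). Then ‖(A A^T)^q G F − A‖_F ≤ ‖H^†‖_2 ‖R‖_2 σ_μ(A)^{−(2q−1)} · (∑_{i=μ+1}^{r} σ_i(A)^{4q})^{1/2} + (∑_{i=μ+1}^{r} σ_i(A)^2)^{1/2}, and ‖F‖_2 ≤ ‖H^†‖_2 / σ_μ(A)^{2q−1}. -/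

import Mathlib

open Matrix
open scoped Matrix.Norms.L2Operator

noncomputable section

/-- Frobenius norm of a real matrix. -/
def frob {m n : Type*} [Fintype m] [Fintype n] (A : Matrix m n ℝ) : ℝ :=
  Real.sqrt (∑ i, ∑ j, (A i j) ^ 2)

/-- Spectral norm of a real matrix. -/
def spec {m n : Type*} [Fintype m] [Fintype n] [DecidableEq n] (A : Matrix m n ℝ) : ℝ :=
  ‖LinearMap.toContinuousLinearMap (Matrix.toEuclideanLin A)‖

section Aux

set_option linter.unusedSectionVars false

variable {m n p : Type*} [Fintype m] [Fintype n] [Fintype p]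

lemma spec_eq_norm [DecidableEq n] (A : Matrix m n ℝ) : spec A = ‖A‖ := rfl

lemma spec_nonneg [DecidableEq n] (A : Matrix m n ℝ) : 0 ≤ spec A := norm_nonneg _

lemma spec_mul_le [DecidableEq n] [DecidableEq p] (A : Matrix m n ℝ) (B : Matrix n p ℝ) :
    spec (A * B) ≤ spec A * spec B := Matrix.l2_opNorm_mul A B

lemma real_conjTranspose (A : Matrix m n ℝ) : Aᴴ = Aᵀ := by
  ext i j; simp [Matrix.conjTranspose_apply]

lemma spec_transpose [DecidableEq m] [DecidableEq n] (A : Matrix m n ℝ) : spec Aᵀ = spec A := by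
  rw [spec_eq_norm, spec_eq_norm, ← real_conjTranspose, Matrix.l2_opNorm_conjTranspose]

lemma spec_le_bound [DecidableEq n] (A : Matrix m n ℝ) {c : ℝ} (hc : 0 ≤ c)
    (h : ∀ x : n → ℝ, Real.sqrt (∑ i, (A *ᵥ x) i ^ 2) ≤ c * Real.sqrt (∑ j, (x j) ^ 2)) :
    spec A ≤ c := by
  unfold spec
  apply ContinuousLinearMap.opNorm_le_bound _ hc
  intro x
  have := h ((WithLp.equiv 2 (n → ℝ)) x)
  simpa [EuclideanSpace.norm_eq, Real.norm_eq_abs, sq_abs,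
    Matrix.toEuclideanLin_apply] using this

lemma spec_mulVec [DecidableEq n] (A : Matrix m n ℝ) (x : n → ℝ) :
    Real.sqrt (∑ i, (A *ᵥ x) i ^ 2) ≤ spec A * Real.sqrt (∑ j, (x j) ^ 2) := by
  have := Matrix.l2_opNorm_mulVec A ((WithLp.equiv 2 (n → ℝ)).symm x)
  simpa [EuclideanSpace.norm_eq, Real.norm_eq_abs, sq_abs, spec_eq_norm] using this

lemma sqrt_add_le {a b : ℝ} (ha : 0 ≤ a) (hb : 0 ≤ b) :
    Real.sqrt (a + b) ≤ Real.sqrt a + Real.sqrt b := by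
  rw [show a + b = Real.sqrt a ^ 2 + Real.sqrt b ^ 2 by
    rw [Real.sq_sqrt ha, Real.sq_sqrt hb]]
  have h1 : Real.sqrt a ^ 2 + Real.sqrt b ^ 2 ≤ (Real.sqrt a + Real.sqrt b) ^ 2 := by
    nlinarith [Real.sqrt_nonneg a, Real.sqrt_nonneg b]
  calc Real.sqrt (Real.sqrt a ^ 2 + Real.sqrt b ^ 2)
      ≤ Real.sqrt ((Real.sqrt a + Real.sqrt b) ^ 2) := Real.sqrt_le_sqrt h1
    _ = Real.sqrt a + Real.sqrt b := by
        rw [Real.sqrt_sq (by positivity)]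

lemma spec_diagonal_le [DecidableEq n] {d : n → ℝ} {c : ℝ} (hc : 0 ≤ c)
    (h : ∀ i, |d i| ≤ c) : spec (Matrix.diagonal d) ≤ c := by
  apply spec_le_bound _ hc
  intro x
  have key : ∀ i, (Matrix.diagonal d *ᵥ x) i ^ 2 ≤ c ^ 2 * x i ^ 2 := by
    intro i
    have h0 : (Matrix.diagonal d *ᵥ x) i = d i * x i := by
      simp [Matrix.mulVec_diagonal]
    rw [h0, mul_pow]
    have h2 : d i ^ 2 ≤ c ^ 2 := by
      rw [← sq_abs]
      exact pow_le_pow_left₀ (abs_nonneg _) (h i) 2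
    nlinarith [sq_nonneg (x i)]
  calc Real.sqrt (∑ i, (Matrix.diagonal d *ᵥ x) i ^ 2)
      ≤ Real.sqrt (∑ i, c ^ 2 * x i ^ 2) :=
        Real.sqrt_le_sqrt (Finset.sum_le_sum fun i _ => key i)
    _ = c * Real.sqrt (∑ i, x i ^ 2) := by
        rw [← Finset.mul_sum, Real.sqrt_mul (by positivity), Real.sqrt_sq hc]

lemma row_sq_le_spec_sq [DecidableEq m] [DecidableEq n] (Y : Matrix m n ℝ) (k : m) :
    ∑ j, Y k j ^ 2 ≤ spec Y ^ 2 := by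
  have h1 : (Yᵀ *ᵥ Pi.single k 1) = fun j => Y k j := by
    ext j
    simp [Matrix.mulVec_single]
  have h2 := spec_mulVec Yᵀ (Pi.single k 1)
  rw [h1, spec_transpose] at h2
  have h3 : ∑ j : m, (Pi.single k 1 : m → ℝ) j ^ 2 = 1 := by
    rw [Finset.sum_eq_single k]
    · simp
    · intro b _ hb; simp [Pi.single_apply, hb]
    · simp
  rw [h3, Real.sqrt_one, mul_one] at h2
  calc ∑ j, Y k j ^ 2 = Real.sqrt (∑ j, Y k j ^ 2) ^ 2 := by
        rw [Real.sq_sqrt (Finset.sum_nonneg fun j _ => sq_nonneg _)]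
    _ ≤ spec Y ^ 2 := pow_le_pow_left₀ (Real.sqrt_nonneg _) h2 2

lemma frob_eq_sqrt_trace (X : Matrix m n ℝ) : frob X = Real.sqrt ((Xᵀ * X).trace) := by
  unfold frob
  congr 1
  rw [Matrix.trace]
  simp only [Matrix.diag, Matrix.mul_apply, Matrix.transpose_apply]
  rw [Finset.sum_comm]
  congr 1; ext i; congr 1; ext j; ring

lemma frob_conj {r' : ℕ} (U : Matrix m (Fin r') ℝ) (V : Matrix n (Fin r') ℝ)
    (M : Matrix (Fin r') (Fin r') ℝ) (hU : Uᵀ * U = 1) (hV : Vᵀ * V = 1) :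
    frob (U * M * Vᵀ) = frob M := by
  rw [frob_eq_sqrt_trace, frob_eq_sqrt_trace]
  congr 1
  have key : (U * M * Vᵀ)ᵀ * (U * M * Vᵀ) = V * ((Mᵀ * M) * Vᵀ) := by
    simp only [Matrix.transpose_mul, Matrix.transpose_transpose, Matrix.mul_assoc]
    rw [← Matrix.mul_assoc Uᵀ U, hU, Matrix.one_mul]
  rw [key, Matrix.trace_mul_comm, Matrix.mul_assoc, hV, Matrix.mul_one]

lemma pow_conj {I r : ℕ} (U : Matrix (Fin I) (Fin r) ℝ) (hU : Uᵀ * U = 1)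
    (d : Fin r → ℝ) (t : ℕ) :
    (U * Matrix.diagonal d * Uᵀ) ^ (t + 1) =
      U * Matrix.diagonal (fun i => d i ^ (t + 1)) * Uᵀ := by
  induction t with
  | zero => simp
  | succ t ih =>
    rw [pow_succ, ih]
    rw [Matrix.mul_assoc (U * Matrix.diagonal fun i => d i ^ (t+1)) Uᵀ,
      ← Matrix.mul_assoc Uᵀ (U * Matrix.diagonal d) Uᵀ,
      ← Matrix.mul_assoc Uᵀ U (Matrix.diagonal d), hU, Matrix.one_mul,
      ← Matrix.mul_assoc, Matrix.mul_assoc U, Matrix.diagonal_mul_diagonal]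
    congr 2 with i

lemma hhdag_one {μ K : ℕ} (H : Matrix (Fin μ) (Fin (μ + K)) ℝ) (hrank : H.rank = μ) :
    H * (Hᵀ * (H * Hᵀ)⁻¹) = 1 := by
  have h1 : (H * Hᵀ).rank = μ := by rw [Matrix.rank_self_mul_transpose, hrank]
  have h2 : LinearMap.range (H * Hᵀ).mulVecLin = ⊤ := by
    apply Submodule.eq_top_of_finrank_eq
    rw [show Module.finrank ℝ (LinearMap.range (H * Hᵀ).mulVecLin) = (H * Hᵀ).rank from rfl, h1]
    simp [Module.finrank_fintype_fun_eq_card]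
  have h3 : Function.Surjective (H * Hᵀ).mulVec := by
    intro y
    obtain ⟨x, hx⟩ := LinearMap.range_eq_top.mp h2 y
    exact ⟨x, hx⟩
  have hdet : IsUnit (H * Hᵀ).det :=
    (Matrix.isUnit_iff_isUnit_det _).mp (Matrix.mulVec_surjective_iff_isUnit.mp h3)
  rw [← Matrix.mul_assoc, Matrix.mul_nonsing_inv _ hdet]

lemma spec_isometry_le_one {J r : ℕ} (V : Matrix (Fin J) (Fin r) ℝ) (hV : Vᵀ * V = 1) :
    spec V ≤ 1 := by
  apply spec_le_bound _ zero_le_one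
  intro x
  rw [one_mul]
  have key : ∑ i, (V *ᵥ x) i ^ 2 = ∑ j, x j ^ 2 := by
    have h1 : ∑ i, (V *ᵥ x) i ^ 2 = (V *ᵥ x) ⬝ᵥ (V *ᵥ x) := by
      simp [dotProduct, sq]
    have h2 : x ⬝ᵥ (Vᵀ *ᵥ (V *ᵥ x)) = (V *ᵥ x) ⬝ᵥ (V *ᵥ x) := by
      rw [Matrix.dotProduct_mulVec, Matrix.vecMul_transpose]
    have h3 : Vᵀ *ᵥ (V *ᵥ x) = x := by
      rw [Matrix.mulVec_mulVec, hV, Matrix.one_mulVec]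
    rw [h1, ← h2, h3]
    simp [dotProduct, sq]
  rw [key]

lemma spec_selector_le_one {μ r : ℕ} (hμr : μ ≤ r) :
    spec (Matrix.of fun (i : Fin μ) (j : Fin r) =>
      if (i : ℕ) = (j : ℕ) then (1:ℝ) else 0) ≤ 1 := by
  apply spec_le_bound _ zero_le_one
  intro x
  rw [one_mul]
  have h1 : ∀ i : Fin μ,
      ((Matrix.of fun (i : Fin μ) (j : Fin r) =>
        if (i : ℕ) = (j : ℕ) then (1:ℝ) else 0) *ᵥ x) i = x (Fin.castLE hμr i) := by
    intro i
    simp only [Matrix.mulVec, dotProduct, Matrix.of_apply]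
    rw [Finset.sum_eq_single (Fin.castLE hμr i)]
    · simp
    · intro b _ hb
      have hne : (i : ℕ) ≠ (b : ℕ) := by
        intro hc
        apply hb; apply Fin.ext; simp [← hc]
      simp [hne]
    · simp
  apply Real.sqrt_le_sqrt
  calc ∑ i : Fin μ, ((Matrix.of fun (i : Fin μ) (j : Fin r) =>
        if (i : ℕ) = (j : ℕ) then (1:ℝ) else 0) *ᵥ x) i ^ 2
      = ∑ i : Fin μ, x (Fin.castLE hμr i) ^ 2 := by
        apply Finset.sum_congr rfl; intro i _; rw [h1]
    _ = ∑ j ∈ Finset.univ.map (Fin.castLEEmb hμr), x j ^ 2 := by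
        rw [Finset.sum_map]; rfl
    _ ≤ ∑ j : Fin r, x j ^ 2 := by
        apply Finset.sum_le_sum_of_subset_of_nonneg (Finset.subset_univ _)
        intro j _ _; exact sq_nonneg _

end Aux

/-- Deterministic core of Theorem 5: given a thin SVD `A = U Σ Vᵀ` with positive
descending singular values `σ`, the blocks `H` (top `μ` rows) and `R` (remaining rows)
of `Uᵀ G`, `H` of full row rank with pseudoinverse `H† = Hᵀ (H Hᵀ)⁻¹`, and
`F = [H† Σ₁^{−(2q−1)}, 0] Vᵀ`, one has the stated bounds.  (Singular values are 1-based
in the informal statement, so `σ_μ(A)` is `σ ⟨μ−1, _⟩` and `∑_{i=μ+1}^{r}` becomes the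
sum over indices `i` with `μ ≤ i`.) -/
theorem stmt11 {I J r μ K : ℕ} (q : ℕ) (hq : 1 ≤ q)
    (hr : r = min I J) (hμ0 : 0 < μ) (hμr : μ < r)
    (A : Matrix (Fin I) (Fin J) ℝ)
    (U : Matrix (Fin I) (Fin r) ℝ) (V : Matrix (Fin J) (Fin r) ℝ) (σ : Fin r → ℝ)
    (hU : Uᵀ * U = 1) (hV : Vᵀ * V = 1)
    (hσpos : ∀ i, 0 < σ i) (hσmono : Antitone σ)
    (hA : A = U * Matrix.diagonal σ * Vᵀ)
    (G : Matrix (Fin I) (Fin (μ + K)) ℝ)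
    (H : Matrix (Fin μ) (Fin (μ + K)) ℝ) (R : Matrix (Fin (r - μ)) (Fin (μ + K)) ℝ)
    (hH : ∀ (i : Fin μ) (j : Fin (μ + K)),
      H i j = (Uᵀ * G) ⟨i, Nat.lt_trans i.isLt hμr⟩ j)
    (hR : ∀ (i : Fin (r - μ)) (j : Fin (μ + K)),
      R i j = (Uᵀ * G) ⟨μ + i, by have := i.isLt; omega⟩ j)
    (hrank : H.rank = μ)
    (Hdag : Matrix (Fin (μ + K)) (Fin μ) ℝ) (hHdag : Hdag = Hᵀ * (H * Hᵀ)⁻¹)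
    (F : Matrix (Fin (μ + K)) (Fin J) ℝ)
    (hF : F = (Matrix.of fun (a : Fin (μ + K)) (j : Fin r) =>
        if h : (j : ℕ) < μ then
          (Hdag * Matrix.diagonal (fun i : Fin μ =>
            (σ ⟨i, Nat.lt_trans i.isLt hμr⟩ ^ (2 * q - 1))⁻¹)) a ⟨j, h⟩
        else 0) * Vᵀ) :
    frob ((A * Aᵀ) ^ q * G * F - A) ≤
        spec Hdag * spec R * (σ ⟨μ - 1, by omega⟩ ^ (2 * q - 1))⁻¹ *
            Real.sqrt (∑ i ∈ Finset.univ.filter (fun i : Fin r => μ ≤ (i : ℕ)),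
              σ i ^ (4 * q)) +
          Real.sqrt (∑ i ∈ Finset.univ.filter (fun i : Fin r => μ ≤ (i : ℕ)), σ i ^ 2) ∧
      spec F ≤ spec Hdag / σ ⟨μ - 1, by omega⟩ ^ (2 * q - 1) := by
  have hμr' : μ ≤ r := hμr.le
  -- basic positivity
  have hσμpos : 0 < σ (⟨μ - 1, by omega⟩ : Fin r) := hσpos _
  have hσμppos : 0 < σ (⟨μ - 1, by omega⟩ : Fin r) ^ (2 * q - 1) := pow_pos hσμpos _
  set dinv : Fin μ → ℝ := fun i : Fin μ =>
    (σ ⟨i, Nat.lt_trans i.isLt hμr⟩ ^ (2 * q - 1))⁻¹ with hdinv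
  set P : Matrix (Fin (μ + K)) (Fin r) ℝ := Matrix.of fun (a : Fin (μ + K)) (j : Fin r) =>
    if h : (j : ℕ) < μ then (Hdag * Matrix.diagonal dinv) a ⟨j, h⟩ else 0 with hP
  -- dinv bounds
  have hdinv_nonneg : ∀ i, 0 ≤ dinv i := fun i =>
    inv_nonneg.mpr (pow_nonneg (hσpos _).le _)
  have hdiag : spec (Matrix.diagonal dinv) ≤
      (σ (⟨μ - 1, by omega⟩ : Fin r) ^ (2 * q - 1))⁻¹ := by
    apply spec_diagonal_le (inv_nonneg.mpr hσμppos.le)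
    intro i
    rw [abs_of_nonneg (hdinv_nonneg i)]
    apply inv_anti₀ hσμppos
    apply pow_le_pow_left₀ hσμpos.le
    apply hσmono
    rw [Fin.le_def]
    simp
    omega
  -- H * Hdag = 1
  have hHHdag : H * Hdag = 1 := by rw [hHdag]; exact hhdag_one H hrank
  -- factor P through the selector
  set E : Matrix (Fin μ) (Fin r) ℝ := Matrix.of fun (i : Fin μ) (j : Fin r) =>
    if (i : ℕ) = (j : ℕ) then (1:ℝ) else 0 with hE
  have hPfact : P = (Hdag * Matrix.diagonal dinv) * E := by
    ext a j
    rw [Matrix.mul_apply]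
    by_cases h : (j : ℕ) < μ
    · rw [show P a j = (Hdag * Matrix.diagonal dinv) a ⟨j, h⟩ by
        rw [hP]; simp only [Matrix.of_apply]; rw [dif_pos h]]
      rw [Finset.sum_eq_single (⟨(j : ℕ), h⟩ : Fin μ)]
      · rw [show E ⟨(j : ℕ), h⟩ j = 1 by rw [hE]; simp]
        rw [mul_one]
      · intro b _ hb
        have hne : (b : ℕ) ≠ (j : ℕ) := fun hc => hb (Fin.ext hc)
        rw [show E b j = 0 by rw [hE]; simp [hne]]
        rw [mul_zero]
      · simp
    · rw [show P a j = 0 by rw [hP]; simp only [Matrix.of_apply]; rw [dif_neg h]]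
      apply (Finset.sum_eq_zero _).symm
      intro i _
      have hne : (i : ℕ) ≠ (j : ℕ) := by omega
      rw [show E i j = 0 by rw [hE]; simp [hne]]
      rw [mul_zero]
  have hspecP : spec P ≤ spec Hdag * (σ (⟨μ - 1, by omega⟩ : Fin r) ^ (2 * q - 1))⁻¹ := by
    rw [hPfact]
    calc spec ((Hdag * Matrix.diagonal dinv) * E)
        ≤ spec (Hdag * Matrix.diagonal dinv) * spec E := spec_mul_le _ _
      _ ≤ (spec Hdag * (σ (⟨μ - 1, by omega⟩ : Fin r) ^ (2 * q - 1))⁻¹) * 1 := by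
          apply mul_le_mul _ _ (spec_nonneg _)
            (mul_nonneg (spec_nonneg _) (inv_nonneg.mpr hσμppos.le))
          · calc spec (Hdag * Matrix.diagonal dinv)
                ≤ spec Hdag * spec (Matrix.diagonal dinv) := spec_mul_le _ _
              _ ≤ spec Hdag * (σ (⟨μ - 1, by omega⟩ : Fin r) ^ (2 * q - 1))⁻¹ :=
                  mul_le_mul_of_nonneg_left hdiag (spec_nonneg _)
          · rw [hE]; exact spec_selector_le_one hμr'
      _ = spec Hdag * (σ (⟨μ - 1, by omega⟩ : Fin r) ^ (2 * q - 1))⁻¹ := mul_one _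
  -- second claim
  have part2 : spec F ≤ spec Hdag / σ (⟨μ - 1, by omega⟩ : Fin r) ^ (2 * q - 1) := by
    rw [hF]
    calc spec (P * Vᵀ) ≤ spec P * spec Vᵀ := spec_mul_le _ _
      _ ≤ (spec Hdag * (σ (⟨μ - 1, by omega⟩ : Fin r) ^ (2 * q - 1))⁻¹) * 1 := by
          apply mul_le_mul hspecP _ (spec_nonneg _)
            (mul_nonneg (spec_nonneg _) (inv_nonneg.mpr hσμppos.le))
          rw [spec_transpose]
          exact spec_isometry_le_one V hV
      _ = spec Hdag / σ (⟨μ - 1, by omega⟩ : Fin r) ^ (2 * q - 1) := by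
          rw [mul_one, div_eq_mul_inv]
  refine ⟨?_, part2⟩
  -- first claim
  -- SVD power identity
  have hAAt : A * Aᵀ = U * Matrix.diagonal (fun i => σ i ^ 2) * Uᵀ := by
    rw [hA]
    have htrans : (U * Matrix.diagonal σ * Vᵀ)ᵀ = V * (Matrix.diagonal σ * Uᵀ) := by
      simp [Matrix.transpose_mul, Matrix.mul_assoc]
    rw [htrans, Matrix.mul_assoc (U * Matrix.diagonal σ) Vᵀ,
      ← Matrix.mul_assoc Vᵀ V (Matrix.diagonal σ * Uᵀ), hV, Matrix.one_mul,
      ← Matrix.mul_assoc, Matrix.mul_assoc U, Matrix.diagonal_mul_diagonal]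
    rw [show (fun i : Fin r => σ i * σ i) = fun i => σ i ^ 2 from
      funext fun i => (sq (σ i)).symm]
  have hpow : (A * Aᵀ) ^ q = U * Matrix.diagonal (fun i => σ i ^ (2 * q)) * Uᵀ := by
    have h2 := pow_conj U hU (fun i => σ i ^ 2) (q - 1)
    rw [show q - 1 + 1 = q from by omega] at h2
    rw [hAAt, h2]
    rw [show (fun i : Fin r => (σ i ^ 2) ^ q) = fun i => σ i ^ (2 * q) from
      funext fun i => by rw [← pow_mul]]
  set N : Matrix (Fin r) (Fin (μ + K)) ℝ := Uᵀ * G with hN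
  set M : Matrix (Fin r) (Fin r) ℝ :=
    Matrix.diagonal (fun i => σ i ^ (2 * q)) * N * P - Matrix.diagonal σ with hM
  have hXeq : (A * Aᵀ) ^ q * G * F - A = U * M * Vᵀ := by
    rw [hpow, hF, hA, hM, hN]
    simp only [Matrix.sub_mul, Matrix.mul_sub, Matrix.mul_assoc]
  -- rows of N
  have hNrow_lt : ∀ (i : Fin r) (hi : (i : ℕ) < μ) (a : Fin (μ + K)),
      N i a = H ⟨(i : ℕ), hi⟩ a := by
    intro i hi a
    rw [hH ⟨(i : ℕ), hi⟩ a]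
  have hNrow_ge : ∀ (i : Fin r) (hi : μ ≤ (i : ℕ)) (a : Fin (μ + K)),
      N i a = R ⟨(i : ℕ) - μ, by omega⟩ a := by
    intro i hi a
    rw [hR ⟨(i : ℕ) - μ, by omega⟩ a]
    have he : (⟨μ + ((i : ℕ) - μ), by have := (⟨(i : ℕ) - μ, by omega⟩ : Fin (r - μ)).isLt; omega⟩ : Fin r) = i := by
      apply Fin.ext
      show μ + ((i : ℕ) - μ) = (i : ℕ)
      omega
    rw [he]
  -- rows of N * Hdag
  have hNH_lt : ∀ (i : Fin r) (hi : (i : ℕ) < μ) (k : Fin μ),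
      (N * Hdag) i k = if (⟨(i : ℕ), hi⟩ : Fin μ) = k then 1 else 0 := by
    intro i hi k
    rw [Matrix.mul_apply]
    rw [Finset.sum_congr rfl fun a _ => by rw [hNrow_lt i hi a]]
    rw [← Matrix.mul_apply, hHHdag, Matrix.one_apply]
  have hNH_ge : ∀ (i : Fin r) (hi : μ ≤ (i : ℕ)) (k : Fin μ),
      (N * Hdag) i k = (R * Hdag) ⟨(i : ℕ) - μ, by omega⟩ k := by
    intro i hi k
    rw [Matrix.mul_apply, Matrix.mul_apply]
    exact Finset.sum_congr rfl fun a _ => by rw [hNrow_ge i hi a]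
  -- the product entry formula
  set Y : Matrix (Fin (r - μ)) (Fin μ) ℝ := R * Hdag * Matrix.diagonal dinv with hY
  have hMP : ∀ (i j : Fin r),
      (Matrix.diagonal (fun i => σ i ^ (2 * q)) * N * P) i j =
        if h : (j : ℕ) < μ then
          σ i ^ (2 * q) * ((N * Hdag) i ⟨(j : ℕ), h⟩ * dinv ⟨(j : ℕ), h⟩)
        else 0 := by
    intro i j
    rw [Matrix.mul_apply]
    by_cases h : (j : ℕ) < μ
    · rw [dif_pos h]
      have hterm : ∀ a, (Matrix.diagonal (fun i => σ i ^ (2 * q)) * N) i a * P a j =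
          σ i ^ (2 * q) * (N i a * Hdag a ⟨(j : ℕ), h⟩ * dinv ⟨(j : ℕ), h⟩) := by
        intro a
        rw [Matrix.diagonal_mul]
        rw [show P a j = (Hdag * Matrix.diagonal dinv) a ⟨(j : ℕ), h⟩ by
          rw [hP]; simp only [Matrix.of_apply]; rw [dif_pos h]]
        rw [Matrix.mul_diagonal]
        ring
      rw [Finset.sum_congr rfl fun a _ => hterm a, ← Finset.mul_sum]
      congr 1
      rw [Matrix.mul_apply, Finset.sum_mul]
    · rw [dif_neg h]
      apply Finset.sum_eq_zero
      intro a _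
      rw [show P a j = 0 by rw [hP]; simp only [Matrix.of_apply]; rw [dif_neg h], mul_zero]
  -- cancellation fact
  have hcancel : ∀ i : Fin r, σ i ^ (2 * q) * (σ i ^ (2 * q - 1))⁻¹ = σ i := by
    intro i
    obtain ⟨n, hn⟩ : ∃ n, 2 * q - 1 = n := ⟨2 * q - 1, rfl⟩
    have hne : σ i ^ n ≠ 0 := ne_of_gt (pow_pos (hσpos i) _)
    rw [hn, show 2 * q = n + 1 from by omega, pow_succ, mul_right_comm,
      mul_inv_cancel₀ hne, one_mul]
  -- entries of M
  have hM_lt : ∀ (i j : Fin r), (i : ℕ) < μ → M i j = 0 := by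
    intro i j hi
    rw [hM]
    simp only [Matrix.sub_apply]
    rw [hMP i j]
    by_cases h : (j : ℕ) < μ
    · rw [dif_pos h, hNH_lt i hi ⟨(j : ℕ), h⟩]
      by_cases hij : i = j
      · subst hij
        rw [if_pos (Fin.ext rfl : (⟨(i : ℕ), hi⟩ : Fin μ) = ⟨(i : ℕ), h⟩), one_mul]
        rw [show dinv ⟨(i : ℕ), h⟩ = (σ i ^ (2 * q - 1))⁻¹ from rfl]
        rw [hcancel i, Matrix.diagonal_apply_eq, sub_self]
      · have h1 : (⟨(i : ℕ), hi⟩ : Fin μ) ≠ ⟨(j : ℕ), h⟩ := by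
          intro hc
          apply hij
          apply Fin.ext
          simpa using congrArg Fin.val hc
        rw [if_neg h1, zero_mul, mul_zero, Matrix.diagonal_apply_ne _ hij, sub_self]
    · rw [dif_neg h]
      have hij : i ≠ j := by
        intro hc; subst hc; omega
      rw [Matrix.diagonal_apply_ne _ hij, sub_self]
  have hM_ge_lt : ∀ (i j : Fin r) (hi : μ ≤ (i : ℕ)) (h : (j : ℕ) < μ),
      M i j = σ i ^ (2 * q) * Y ⟨(i : ℕ) - μ, by omega⟩ ⟨(j : ℕ), h⟩ := by
    intro i j hi h
    rw [hM]
    simp only [Matrix.sub_apply]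
    rw [hMP i j, dif_pos h, hNH_ge i hi ⟨(j : ℕ), h⟩]
    have hij : i ≠ j := by
      intro hc; subst hc; omega
    rw [Matrix.diagonal_apply_ne _ hij, sub_zero, hY, Matrix.mul_diagonal]
  have hM_ge_ge : ∀ (i j : Fin r), μ ≤ (i : ℕ) → μ ≤ (j : ℕ) →
      M i j = if i = j then -σ i else 0 := by
    intro i j hi hj
    rw [hM]
    simp only [Matrix.sub_apply]
    rw [hMP i j, dif_neg (by omega), zero_sub, Matrix.diagonal_apply]
    by_cases hij : i = j
    · rw [if_pos hij, if_pos hij]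
    · rw [if_neg hij, if_neg hij, neg_zero]
  -- spectral bound on Y
  set c : ℝ := spec Hdag * spec R * (σ (⟨μ - 1, by omega⟩ : Fin r) ^ (2 * q - 1))⁻¹ with hc
  have hc_nonneg : 0 ≤ c := by
    rw [hc]
    exact mul_nonneg (mul_nonneg (spec_nonneg _) (spec_nonneg _)) (inv_nonneg.mpr hσμppos.le)
  have hYspec : spec Y ≤ c := by
    rw [hY]
    calc spec (R * Hdag * Matrix.diagonal dinv)
        ≤ spec (R * Hdag) * spec (Matrix.diagonal dinv) := spec_mul_le _ _
      _ ≤ (spec R * spec Hdag) * (σ (⟨μ - 1, by omega⟩ : Fin r) ^ (2 * q - 1))⁻¹ :=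
          mul_le_mul (spec_mul_le _ _) hdiag (spec_nonneg _)
            (mul_nonneg (spec_nonneg _) (spec_nonneg _))
      _ = c := by rw [hc]; ring
  have hrowY : ∀ k : Fin (r - μ), ∑ j' : Fin μ, Y k j' ^ 2 ≤ c ^ 2 := fun k =>
    le_trans (row_sq_le_spec_sq Y k) (pow_le_pow_left₀ (spec_nonneg _) hYspec 2)
  -- row sums of M
  have hfilter_eq : Finset.univ.filter (fun j : Fin r => (j : ℕ) < μ) =
      Finset.univ.map (Fin.castLEEmb hμr') := by
    ext j
    simp only [Finset.mem_filter, Finset.mem_univ, true_and]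
    constructor
    · intro hj
      refine Finset.mem_map.mpr ⟨⟨(j : ℕ), hj⟩, Finset.mem_univ _, ?_⟩
      apply Fin.ext
      simp
    · intro hj
      obtain ⟨a, -, rfl⟩ := Finset.mem_map.mp hj
      simpa using a.isLt
  have hrow_le : ∀ i : Fin r, μ ≤ (i : ℕ) →
      ∑ j, M i j ^ 2 ≤ σ i ^ (4 * q) * c ^ 2 + σ i ^ 2 := by
    intro i hi
    rw [← Finset.sum_filter_add_sum_filter_not Finset.univ
      (fun j : Fin r => (j : ℕ) < μ) (fun j => M i j ^ 2)]
    have hpart2 : ∑ j ∈ Finset.univ.filter (fun j : Fin r => ¬ (j : ℕ) < μ), M i j ^ 2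
        = σ i ^ 2 := by
      have h0 : ∀ b ∈ Finset.univ.filter (fun j : Fin r => ¬ (j : ℕ) < μ), b ≠ i →
          M i b ^ 2 = 0 := by
        intro b hb hbne
        have hjb : μ ≤ (b : ℕ) := by
          simp only [Finset.mem_filter, Finset.mem_univ, true_and] at hb; omega
        rw [hM_ge_ge i b hi hjb, if_neg (fun hc => hbne hc.symm)]
        norm_num
      rw [Finset.sum_eq_single_of_mem i
        (by simp only [Finset.mem_filter, Finset.mem_univ, true_and]; omega) h0,
        hM_ge_ge i i hi (by omega), if_pos rfl]
      ring
    have hpart1 : ∑ j ∈ Finset.univ.filter (fun j : Fin r => (j : ℕ) < μ), M i j ^ 2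
        ≤ σ i ^ (4 * q) * c ^ 2 := by
      rw [hfilter_eq, Finset.sum_map]
      have hterm : ∀ j' : Fin μ, M i ((Fin.castLEEmb hμr') j') ^ 2 =
          σ i ^ (4 * q) * Y ⟨(i : ℕ) - μ, by omega⟩ j' ^ 2 := by
        intro j'
        have hlt : (((Fin.castLEEmb hμr' j') : Fin r) : ℕ) < μ := by simpa using j'.isLt
        rw [hM_ge_lt i _ hi hlt]
        rw [show (⟨(((Fin.castLEEmb hμr') j' : Fin r) : ℕ), hlt⟩ : Fin μ) = j' from
          Fin.ext (by simp)]
        rw [mul_pow, ← pow_mul, show 2 * q * 2 = 4 * q from by ring]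
      rw [Finset.sum_congr rfl fun j' _ => hterm j', ← Finset.mul_sum]
      exact mul_le_mul_of_nonneg_left (hrowY _) (pow_nonneg (hσpos i).le _)
    rw [hpart2]
    exact add_le_add_left hpart1 _
  have hrow0 : ∀ i : Fin r, (i : ℕ) < μ → ∑ j, M i j ^ 2 = 0 := by
    intro i hi
    apply Finset.sum_eq_zero
    intro j _
    rw [hM_lt i j hi]
    norm_num
  -- total bound
  have hSa0 : 0 ≤ ∑ i ∈ Finset.univ.filter (fun i : Fin r => μ ≤ (i : ℕ)), σ i ^ (4 * q) :=
    Finset.sum_nonneg fun i _ => pow_nonneg (hσpos i).le _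
  have hSb0 : 0 ≤ ∑ i ∈ Finset.univ.filter (fun i : Fin r => μ ≤ (i : ℕ)), σ i ^ 2 :=
    Finset.sum_nonneg fun i _ => sq_nonneg _
  have hS : ∑ i, ∑ j, M i j ^ 2 ≤
      c ^ 2 * (∑ i ∈ Finset.univ.filter (fun i : Fin r => μ ≤ (i : ℕ)), σ i ^ (4 * q)) +
      (∑ i ∈ Finset.univ.filter (fun i : Fin r => μ ≤ (i : ℕ)), σ i ^ 2) := by
    rw [← Finset.sum_filter_add_sum_filter_not Finset.univ
      (fun i : Fin r => μ ≤ (i : ℕ)) (fun i => ∑ j, M i j ^ 2)]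
    have hz : ∑ i ∈ Finset.univ.filter (fun i : Fin r => ¬ μ ≤ (i : ℕ)), ∑ j, M i j ^ 2 = 0 :=
      Finset.sum_eq_zero fun i hi => hrow0 i
        (by simp only [Finset.mem_filter, Finset.mem_univ, true_and] at hi; omega)
    rw [hz, add_zero]
    calc ∑ i ∈ Finset.univ.filter (fun i : Fin r => μ ≤ (i : ℕ)), ∑ j, M i j ^ 2
        ≤ ∑ i ∈ Finset.univ.filter (fun i : Fin r => μ ≤ (i : ℕ)),
            (σ i ^ (4 * q) * c ^ 2 + σ i ^ 2) :=
          Finset.sum_le_sum fun i hi => hrow_le i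
            (by simp only [Finset.mem_filter, Finset.mem_univ, true_and] at hi; exact hi)
      _ = c ^ 2 * (∑ i ∈ Finset.univ.filter (fun i : Fin r => μ ≤ (i : ℕ)), σ i ^ (4 * q)) +
          (∑ i ∈ Finset.univ.filter (fun i : Fin r => μ ≤ (i : ℕ)), σ i ^ 2) := by
          rw [Finset.sum_add_distrib, ← Finset.sum_mul]
          ring
  calc frob ((A * Aᵀ) ^ q * G * F - A) = frob M := by rw [hXeq, frob_conj U V M hU hV]
    _ ≤ c * Real.sqrt (∑ i ∈ Finset.univ.filter (fun i : Fin r => μ ≤ (i : ℕ)), σ i ^ (4 * q))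
        + Real.sqrt (∑ i ∈ Finset.univ.filter (fun i : Fin r => μ ≤ (i : ℕ)), σ i ^ 2) := by
        unfold frob
        calc Real.sqrt (∑ i, ∑ j, M i j ^ 2)
            ≤ Real.sqrt (c ^ 2 *
                (∑ i ∈ Finset.univ.filter (fun i : Fin r => μ ≤ (i : ℕ)), σ i ^ (4 * q)) +
                (∑ i ∈ Finset.univ.filter (fun i : Fin r => μ ≤ (i : ℕ)), σ i ^ 2)) :=
              Real.sqrt_le_sqrt hS
          _ ≤ Real.sqrt (c ^ 2 *
                (∑ i ∈ Finset.univ.filter (fun i : Fin r => μ ≤ (i : ℕ)), σ i ^ (4 * q))) +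
              Real.sqrt (∑ i ∈ Finset.univ.filter (fun i : Fin r => μ ≤ (i : ℕ)), σ i ^ 2) :=
              sqrt_add_le (mul_nonneg (sq_nonneg c) hSa0) hSb0
          _ = c * Real.sqrt
                (∑ i ∈ Finset.univ.filter (fun i : Fin r => μ ≤ (i : ℕ)), σ i ^ (4 * q)) +
              Real.sqrt (∑ i ∈ Finset.univ.filter (fun i : Fin r => μ ≤ (i : ℕ)), σ i ^ 2) := by
              rw [Real.sqrt_mul (sq_nonneg c), Real.sqrt_sq hc_nonneg]

end
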